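/- Let a > 0, b ≠ 0, H > 1/2 and X_t = exp{at - (1/2)b²t^{2H} + bB^H_t}. Then X_t → 0 almost surely as t → +∞. -/

import Mathlib

open MeasureTheory ProbabilityTheory Real Filter Set
open scoped NNReal ENNReal


private lemma my_integral_exp_neg_mul_Ioi {c : ℝ} (hc : 0 < c) :
    ∫ x in Ioi (0:ℝ), Real.exp (-c * x) = c⁻¹ := by
  have h := integral_exp_neg_mul_rpow zero_lt_one hc
  simp only [Real.rpow_one] at h
  rw [h, show (-1/1 : ℝ) = -1 by norm_num, Real.rpow_neg hc.le, Real.rpow_one]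
  norm_num [Real.Gamma_two]

private lemma my_gamma_32 : Real.Gamma (3/2) = Real.sqrt π / 2 := by
  rw [show (3/2 : ℝ) = 1/2 + 1 by norm_num, Real.Gamma_add_one (by norm_num),
    Real.Gamma_one_half_eq]
  ring

private lemma my_integral_sq_gauss {bb : ℝ} (hb : 0 < bb) :
    ∫ x : ℝ, x ^ 2 * Real.exp (-bb * x ^ 2) = bb ^ (-(3/2) : ℝ) * Real.sqrt π / 2 := by
  have habs : ∫ x : ℝ, x ^ 2 * Real.exp (-bb * x ^ 2)
      = 2 * ∫ x in Ioi (0:ℝ), x ^ 2 * Real.exp (-bb * x ^ 2) := by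
    rw [← integral_comp_abs (f := fun y => y ^ 2 * Real.exp (-bb * y ^ 2))]
    congr 1 with x
    rw [sq_abs]
  rw [habs]
  have h2 : ∫ x in Ioi (0:ℝ), x ^ 2 * Real.exp (-bb * x ^ 2)
      = ∫ x in Ioi (0:ℝ), x ^ (2:ℝ) * Real.exp (-bb * x ^ (2:ℝ)) := by
    refine setIntegral_congr_fun measurableSet_Ioi (fun x hx => ?_)
    rw [show x ^ (2:ℝ) = x ^ 2 by
      rw [show (2:ℝ) = ((2:ℕ):ℝ) by norm_num, Real.rpow_natCast]]
  rw [h2, integral_rpow_mul_exp_neg_mul_rpow (by norm_num) (by norm_num) hb]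
  rw [show (-(2+1)/2 : ℝ) = -(3/2) by norm_num, show ((2:ℝ)+1)/2 = 3/2 by norm_num, my_gamma_32]
  ring

private lemma my_gauss_repr {v : NNReal} (hv : v ≠ 0) :
    gaussianReal 0 v = MeasureTheory.volume.withDensity
      (fun x => ((gaussianPDFReal 0 v x).toNNReal : ENNReal)) := by
  rw [gaussianReal_of_var_ne_zero _ hv]
  rfl

private lemma my_pdf_mul_sq {v : NNReal} (hv : v ≠ 0) :
    (fun x : ℝ => gaussianPDFReal 0 v x * x ^ 2)
      = fun x : ℝ => (Real.sqrt (2 * π * v))⁻¹ * (x ^ 2 * Real.exp (-(2*(v:ℝ))⁻¹ * x ^ 2)) := by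
  funext x
  rw [gaussianPDFReal_def]
  simp only []
  have hV : (0:ℝ) < (v:ℝ) := by positivity
  have : -(x - 0) ^ 2 / (2 * (v:ℝ)) = -(2*(v:ℝ))⁻¹ * x ^ 2 := by
    field_simp
    ring
  rw [this]
  ring

private lemma my_gauss_moment (v : NNReal) :
    Integrable (fun x : ℝ => x ^ 2) (gaussianReal 0 v)
      ∧ ∫ x : ℝ, x ^ 2 ∂(gaussianReal 0 v) = (v : ℝ) := by
  by_cases hv : v = 0
  · subst hv
    rw [gaussianReal_zero_var]
    constructor
    · refine ⟨(measurable_id.pow_const 2).aestronglyMeasurable, ?_⟩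
      rw [HasFiniteIntegral, lintegral_dirac]
      simp
    · rw [integral_dirac]
      simp
  · have hV : (0:ℝ) < (v:ℝ) := by positivity
    have hb : (0:ℝ) < (2*(v:ℝ))⁻¹ := by positivity
    have hmeas : Measurable fun x : ℝ => (gaussianPDFReal 0 v x).toNNReal :=
      (measurable_gaussianPDFReal 0 v).real_toNNReal
    have hsmul : (fun x : ℝ => ((gaussianPDFReal 0 v x).toNNReal : ℝ≥0) • (x ^ 2 : ℝ))
        = fun x : ℝ => gaussianPDFReal 0 v x * x ^ 2 := by
      funext x
      rw [NNReal.smul_def, smul_eq_mul, Real.coe_toNNReal _ (gaussianPDFReal_nonneg 0 v x)]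
    have hint : Integrable (fun x : ℝ => gaussianPDFReal 0 v x * x ^ 2) := by
      rw [my_pdf_mul_sq hv]
      refine Integrable.const_mul ?_ _
      have := integrable_rpow_mul_exp_neg_mul_sq hb (s := 2) (by norm_num)
      refine this.congr ?_
      filter_upwards with x
      rw [show x ^ (2:ℝ) = x ^ 2 by
        rw [show (2:ℝ) = ((2:ℕ):ℝ) by norm_num, Real.rpow_natCast]]
    constructor
    · rw [my_gauss_repr hv, integrable_withDensity_iff_integrable_smul hmeas]
      rw [hsmul]; exact hint
    · rw [my_gauss_repr hv, integral_withDensity_eq_integral_smul hmeas, hsmul,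
        my_pdf_mul_sq hv, integral_const_mul, my_integral_sq_gauss hb]
      -- now pure algebra
      have h2V : (0:ℝ) < 2*(v:ℝ) := by positivity
      have h1 : ((2*(v:ℝ))⁻¹) ^ (-(3/2) : ℝ) = (2*(v:ℝ)) ^ ((3/2) : ℝ) := by
        rw [Real.inv_rpow h2V.le, Real.rpow_neg h2V.le, inv_inv]
      have h2 : Real.sqrt (2 * π * (v:ℝ)) = Real.sqrt π * (2*(v:ℝ)) ^ ((1/2) : ℝ) := by
        rw [show 2 * π * (v:ℝ) = π * (2*(v:ℝ)) by ring, Real.sqrt_mul pi_pos.le,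
          Real.sqrt_eq_rpow (2*(v:ℝ))]
      have h3 : (2*(v:ℝ)) ^ ((3/2) : ℝ) = (2*(v:ℝ)) ^ ((1/2) : ℝ) * (2*(v:ℝ)) := by
        rw [show (3/2 : ℝ) = 1/2 + 1 by norm_num, Real.rpow_add h2V, Real.rpow_one]
      rw [h1, h2, h3]
      have hπ : (0:ℝ) < Real.sqrt π := Real.sqrt_pos.mpr pi_pos
      have hr : (0:ℝ) < (2*(v:ℝ)) ^ ((1/2) : ℝ) := Real.rpow_pos_of_pos h2V _
      field_simp

-- one-sided pdf tail bound
private lemma my_pdf_tail {v : NNReal} (hv : v ≠ 0) {σ lam : ℝ} (hσ : 0 < σ)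
    (hvσ : (v:ℝ) ≤ σ ^ 2) (hσl : σ ≤ lam) :
    ∫ x in Ioi lam, gaussianPDFReal 0 v x ≤ 2 * Real.exp (-(lam ^ 2 / (4 * σ ^ 2))) := by
  have hV : (0:ℝ) < (v:ℝ) := by positivity
  have hlam : 0 < lam := lt_of_lt_of_le hσ hσl
  have hc : (0:ℝ) < lam / (4 * (v:ℝ)) := by positivity
  set c1 : ℝ := (Real.sqrt (2 * π * (v:ℝ)))⁻¹ with hc1
  have hc1pos : 0 < c1 := by
    rw [hc1]; positivity
  -- pointwise bound on Ioi lam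
  have hpt : ∀ x ∈ Ioi lam, gaussianPDFReal 0 v x
      ≤ c1 * Real.exp (-(lam ^ 2 / (4 * (v:ℝ)))) * Real.exp (-(lam / (4 * (v:ℝ))) * x) := by
    intro x hx
    have hx' : lam < x := hx
    have h1 : -(x - 0)^2/(2*(v:ℝ)) ≤ -(lam^2/(4*(v:ℝ))) + -(lam/(4*(v:ℝ)))*x := by
      rw [show -(x - 0)^2/(2*(v:ℝ)) = (-(x^2) * 2)/(4*(v:ℝ)) by ring,
        show -(lam^2/(4*(v:ℝ))) + -(lam/(4*(v:ℝ)))*x = (-(lam^2) - lam*x)/(4*(v:ℝ)) by ring,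
        div_le_div_iff₀ (by positivity) (by positivity : (0:ℝ) < 4*(v:ℝ))]
      have h2 : lam^2 + lam*x ≤ 2*x^2 := by nlinarith [sq_nonneg (x - lam)]
      nlinarith [h2, hV]
    rw [gaussianPDFReal_def]
    calc (Real.sqrt (2*π*(v:ℝ)))⁻¹ * Real.exp (-(x - 0)^2 / (2*(v:ℝ)))
        ≤ (Real.sqrt (2*π*(v:ℝ)))⁻¹ * Real.exp (-(lam^2/(4*(v:ℝ))) + -(lam/(4*(v:ℝ)))*x) :=
          mul_le_mul_of_nonneg_left (Real.exp_le_exp.mpr h1) (by positivity)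
      _ = c1 * Real.exp (-(lam^2/(4*(v:ℝ)))) * Real.exp (-(lam/(4*(v:ℝ)))*x) := by
          rw [Real.exp_add, hc1]; ring
  -- integral bound
  have hint1 : IntegrableOn (gaussianPDFReal 0 v) (Ioi lam) :=
    (integrable_gaussianPDFReal 0 v).integrableOn
  have hint2 : IntegrableOn
      (fun x => c1 * Real.exp (-(lam ^ 2 / (4 * (v:ℝ)))) * Real.exp (-(lam / (4 * (v:ℝ))) * x))
      (Ioi lam) :=
    ((exp_neg_integrableOn_Ioi lam hc).const_mul _)
  calc ∫ x in Ioi lam, gaussianPDFReal 0 v x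
      ≤ ∫ x in Ioi lam,
        c1 * Real.exp (-(lam ^ 2 / (4 * (v:ℝ)))) * Real.exp (-(lam / (4 * (v:ℝ))) * x) :=
        setIntegral_mono_on hint1 hint2 measurableSet_Ioi hpt
    _ ≤ ∫ x in Ioi (0:ℝ),
        c1 * Real.exp (-(lam ^ 2 / (4 * (v:ℝ)))) * Real.exp (-(lam / (4 * (v:ℝ))) * x) := by
        refine setIntegral_mono_set ((exp_neg_integrableOn_Ioi 0 hc).const_mul _) ?_ ?_
        · filter_upwards with x; positivity
        · exact HasSubset.Subset.eventuallyLE (Ioi_subset_Ioi hlam.le)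
    _ = c1 * Real.exp (-(lam ^ 2 / (4 * (v:ℝ)))) * (lam / (4 * (v:ℝ)))⁻¹ := by
        rw [integral_const_mul, my_integral_exp_neg_mul_Ioi hc]
    _ ≤ 2 * Real.exp (-(lam ^ 2 / (4 * σ ^ 2))) := by
        have hmono : Real.exp (-(lam ^ 2 / (4 * (v:ℝ)))) ≤ Real.exp (-(lam ^ 2 / (4 * σ ^ 2))) := by
          rw [Real.exp_le_exp, neg_le_neg_iff]
          exact div_le_div_of_nonneg_left (by positivity) (by positivity)
            (by nlinarith)
        have hconst : c1 * (lam / (4 * (v:ℝ)))⁻¹ ≤ 2 := by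
          rw [hc1]
          have hs : Real.sqrt (v:ℝ) ≤ lam := by
            refine le_trans ?_ hσl
            calc Real.sqrt (v:ℝ) ≤ Real.sqrt (σ^2) := Real.sqrt_le_sqrt hvσ
              _ = σ := Real.sqrt_sq hσ.le
          have hsq : Real.sqrt ((v:ℝ)) ^ 2 = (v:ℝ) := Real.sq_sqrt hV.le
          have hspos : 0 < Real.sqrt (v:ℝ) := Real.sqrt_pos.mpr hV
          have hw : 2 * Real.sqrt (v:ℝ) ≤ Real.sqrt (2 * π * (v:ℝ)) := by
            rw [show 2 * Real.sqrt (v:ℝ) = Real.sqrt 4 * Real.sqrt (v:ℝ) by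
              rw [show (4:ℝ) = 2^2 by norm_num, Real.sqrt_sq]; norm_num,
              ← Real.sqrt_mul (by norm_num)]
            refine Real.sqrt_le_sqrt ?_
            nlinarith [pi_gt_three]
          have hwpos : 0 < Real.sqrt (2 * π * (v:ℝ)) := by positivity
          rw [inv_mul_le_iff₀ hwpos, inv_div]
          rw [div_le_iff₀ hlam]
          nlinarith
        calc c1 * Real.exp (-(lam ^ 2 / (4 * (v:ℝ)))) * (lam / (4 * (v:ℝ)))⁻¹
            = (c1 * (lam / (4 * (v:ℝ)))⁻¹) * Real.exp (-(lam ^ 2 / (4 * (v:ℝ)))) := by ring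
          _ ≤ 2 * Real.exp (-(lam ^ 2 / (4 * σ ^ 2))) := by
            exact mul_le_mul hconst hmono (by positivity) (by norm_num)

private lemma my_gauss_tail (v : NNReal) {σ lam E : ℝ} (hσ : 0 < σ)
    (hvσ : (v:ℝ) ≤ σ ^ 2) (hσl : σ ≤ lam) (hE : E ≤ lam ^ 2 / (4 * σ ^ 2)) :
    gaussianReal 0 v {x : ℝ | lam < |x|} ≤ ENNReal.ofReal (4 * Real.exp (-E)) := by
  have hlam : 0 < lam := lt_of_lt_of_le hσ hσl
  have hmonoE : Real.exp (-(lam ^ 2 / (4 * σ ^ 2))) ≤ Real.exp (-E) :=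
    Real.exp_le_exp.mpr (neg_le_neg hE)
  by_cases hv : v = 0
  · subst hv
    rw [gaussianReal_zero_var]
    rw [Measure.dirac_apply' _ (measurableSet_lt measurable_const measurable_abs)]
    simp only [Set.indicator]
    rw [if_neg (by simp [abs_of_nonneg, hlam.not_gt] : (0:ℝ) ∉ {x : ℝ | lam < |x|})]
    positivity
  · have hsub : {x : ℝ | lam < |x|} ⊆ Ioi lam ∪ Iic (-lam) := by
      intro x hx
      simp only [Set.mem_setOf_eq] at hx
      rcases abs_cases x with ⟨h, _⟩ | ⟨h, _⟩
      · left; exact Set.mem_Ioi.mpr (by linarith)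
      · right; exact Set.mem_Iic.mpr (by linarith)
    refine le_trans (measure_mono hsub) (le_trans (measure_union_le _ _) ?_)
    have h1 : gaussianReal 0 v (Ioi lam) ≤ ENNReal.ofReal (2 * Real.exp (-E)) := by
      rw [gaussianReal_apply_eq_integral _ hv]
      refine ENNReal.ofReal_le_ofReal ?_
      refine le_trans (my_pdf_tail hv hσ hvσ hσl) ?_
      nlinarith [Real.exp_pos (-(lam ^ 2 / (4 * σ ^ 2)))]
    have h2 : gaussianReal 0 v (Iic (-lam)) ≤ ENNReal.ofReal (2 * Real.exp (-E)) := by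
      rw [gaussianReal_apply_eq_integral _ hv]
      refine ENNReal.ofReal_le_ofReal ?_
      have hrefl : ∫ x in Iic (-lam), gaussianPDFReal 0 v x
          = ∫ x in Ioi lam, gaussianPDFReal 0 v x := by
        rw [← integral_comp_neg_Ioi]
        refine setIntegral_congr_fun measurableSet_Ioi (fun x _ => ?_)
        rw [gaussianPDFReal_def]
        simp only []
        rw [show (-x - 0)^2 = (x - 0)^2 by ring]
      rw [hrefl]
      refine le_trans (my_pdf_tail hv hσ hvσ hσl) ?_
      nlinarith [Real.exp_pos (-(lam ^ 2 / (4 * σ ^ 2)))]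
    refine le_trans (add_le_add h1 h2) ?_
    rw [← ENNReal.ofReal_add (by positivity) (by positivity)]
    refine ENNReal.ofReal_le_ofReal (by nlinarith [Real.exp_pos (-E)])

private lemma my_aemeasurable_of_map {Ω : Type*} [MeasurableSpace Ω] {P : Measure Ω}
    {Y : Ω → ℝ} {v : NNReal} (hmap : Measure.map Y P = gaussianReal 0 v) :
    AEMeasurable Y P := by
  by_contra h
  rw [Measure.map_of_not_aemeasurable h] at hmap
  have h1 := congrArg (fun μ : Measure ℝ => μ Set.univ) hmap
  simp [measure_univ] at h1

private lemma my_tail_via_map {Ω : Type*} [MeasurableSpace Ω] {P : Measure Ω}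
    {Y : Ω → ℝ} {v : NNReal} (hmap : Measure.map Y P = gaussianReal 0 v)
    {σ lam E : ℝ} (hσ : 0 < σ) (hvσ : (v:ℝ) ≤ σ ^ 2) (hσl : σ ≤ lam)
    (hE : E ≤ lam ^ 2 / (4 * σ ^ 2)) :
    P {ω | lam < |Y ω|} ≤ ENNReal.ofReal (4 * Real.exp (-E)) := by
  have haem := my_aemeasurable_of_map hmap
  have hset : MeasurableSet {x : ℝ | lam < |x|} :=
    measurableSet_lt measurable_const measurable_abs
  have : {ω | lam < |Y ω|} = Y ⁻¹' {x : ℝ | lam < |x|} := rfl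
  rw [this, ← Measure.map_apply_of_aemeasurable haem hset, hmap]
  exact my_gauss_tail v hσ hvσ hσl hE

private lemma my_moment_via_map {Ω : Type*} [MeasurableSpace Ω] {P : Measure Ω}
    {Y : Ω → ℝ} {v : NNReal} (hmap : Measure.map Y P = gaussianReal 0 v) :
    Integrable (fun ω => (Y ω) ^ 2) P ∧ ∫ ω, (Y ω) ^ 2 ∂P = (v : ℝ) := by
  have haem := my_aemeasurable_of_map hmap
  have hsm : AEStronglyMeasurable (fun x : ℝ => x ^ 2) (Measure.map Y P) :=
    (measurable_id.pow_const 2).aestronglyMeasurable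
  constructor
  · have := (integrable_map_measure hsm haem).mp (by rw [hmap]; exact (my_gauss_moment v).1)
    exact this
  · have := integral_map haem hsm (f := fun x : ℝ => x ^ 2)
    rw [hmap] at this
    rw [← this]
    exact (my_gauss_moment v).2

private lemma my_chaining {g : ℝ → ℝ} (hg : Continuous g) {r L : ℝ} (hL : 0 ≤ L)
    (h0 : g r = 0)
    (hinc : ∀ k j : ℕ, j < 2 ^ (k + 1) →
      |g (r + ((j : ℝ) + 1) / 2 ^ (k + 1)) - g (r + (j : ℝ) / 2 ^ (k + 1))| ≤ L * (3 / 4) ^ (k + 1))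
    {t : ℝ} (ht : t ∈ Set.Icc r (r + 1)) : |g t| ≤ 3 * L := by
  -- partial geometric sums are at most 3
  have hsum : ∀ K : ℕ, ∑ k ∈ Finset.range K, (3 / 4 : ℝ) ^ (k + 1) ≤ 3 := by
    intro K
    have h1 : ∑ k ∈ Finset.range K, (3 / 4 : ℝ) ^ (k + 1)
        = (∑ k ∈ Finset.range K, (3 / 4 : ℝ) ^ k) * (3 / 4) := by
      simp_rw [pow_succ]
      rw [← Finset.sum_mul]
    have h2 : ∑ k ∈ Finset.range K, (3 / 4 : ℝ) ^ k ≤ 4 := by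
      have h3 := Summable.sum_le_tsum (Finset.range K)
        (fun i _ => by positivity : ∀ i ∉ Finset.range K, (0:ℝ) ≤ (3/4:ℝ) ^ i)
        (summable_geometric_of_lt_one (by norm_num) (by norm_num))
      rw [tsum_geometric_of_lt_one (by norm_num) (by norm_num)] at h3
      norm_num at h3
      exact h3
    nlinarith
  -- dyadic induction
  have key : ∀ K : ℕ, ∀ j : ℕ, j < 2 ^ K →
      |g (r + (j : ℝ) / 2 ^ K)| ≤ L * ∑ k ∈ Finset.range K, (3 / 4 : ℝ) ^ (k + 1) := by
    intro K
    induction K with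
    | zero =>
      intro j hj
      interval_cases j
      simp [h0]
    | succ K ih =>
      intro j hj
      have hpow : (2:ℕ) ^ (K + 1) = 2 * 2 ^ K := by ring
      have hsum_succ : ∑ k ∈ Finset.range (K + 1), (3 / 4 : ℝ) ^ (k + 1)
          = (∑ k ∈ Finset.range K, (3 / 4 : ℝ) ^ (k + 1)) + (3 / 4) ^ (K + 1) :=
        Finset.sum_range_succ _ _
      rcases Nat.even_or_odd j with ⟨j', hj'⟩ | ⟨j', hj'⟩
      · -- even : j = j' + j'
        have hj'lt : j' < 2 ^ K := by omega
        have hpt : r + (j : ℝ) / 2 ^ (K + 1) = r + (j' : ℝ) / 2 ^ K := by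
          subst hj'
          push_cast
          field_simp
          ring
        rw [hpt, hsum_succ]
        have := ih j' hj'lt
        nlinarith [pow_pos (show (0:ℝ) < 3/4 by norm_num) (K + 1)]
      · -- odd : j = 2 * j' + 1
        have hj'lt : j' < 2 ^ K := by omega
        have h2j : 2 * j' < 2 ^ (K + 1) := by omega
        have hpt0 : r + ((2 * j' : ℕ) : ℝ) / 2 ^ (K + 1) = r + (j' : ℝ) / 2 ^ K := by
          push_cast
          field_simp
          ring
        have hpt1 : r + (j : ℝ) / 2 ^ (K + 1) = r + (((2 * j' : ℕ) : ℝ) + 1) / 2 ^ (K + 1) := by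
          subst hj'
          push_cast
          ring
        have hstep := hinc K (2 * j') h2j
        rw [hpt0] at hstep
        have hbase := ih j' hj'lt
        rw [hpt1, hsum_succ]
        set p0 := r + (j' : ℝ) / 2 ^ K
        set p1 := r + (((2 * j' : ℕ) : ℝ) + 1) / 2 ^ (K + 1)
        calc |g p1| = |g p0 + (g p1 - g p0)| := by ring_nf
          _ ≤ |g p0| + |g p1 - g p0| := abs_add_le _ _
          _ ≤ L * (∑ k ∈ Finset.range K, (3 / 4 : ℝ) ^ (k + 1)) + L * (3 / 4) ^ (K + 1) :=
              add_le_add hbase hstep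
          _ = L * ((∑ k ∈ Finset.range K, (3 / 4 : ℝ) ^ (k + 1)) + (3 / 4) ^ (K + 1)) := by ring
  -- dyadic points bound
  have hdyadic : ∀ K : ℕ, ∀ j : ℕ, j < 2 ^ K → |g (r + (j : ℝ) / 2 ^ K)| ≤ 3 * L := by
    intro K j hj
    refine le_trans (key K j hj) ?_
    nlinarith [hsum K, Finset.sum_nonneg (fun k (_ : k ∈ Finset.range K) =>
      (by positivity : (0:ℝ) ≤ (3/4:ℝ) ^ (k + 1)))]
  obtain ⟨htr, htr1⟩ := ht
  -- approximating sequence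
  set u : ℕ → ℝ := fun K => r + ((min ⌊2 ^ K * (t - r)⌋₊ (2 ^ K - 1) : ℕ) : ℝ) / 2 ^ K with hu
  have hbound : ∀ K, |g (u K)| ≤ 3 * L := by
    intro K
    refine hdyadic K _ ?_
    have : (2:ℕ) ^ K - 1 < 2 ^ K := Nat.sub_lt (Nat.pow_pos (by norm_num)) one_pos
    omega
  have hsqueeze : ∀ K : ℕ, t - 1 / 2 ^ K ≤ u K ∧ u K ≤ t := by
    intro K
    have hm0 : (0:ℝ) ≤ 2 ^ K * (t - r) := by
      have : (0:ℝ) ≤ t - r := by linarith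
      positivity
    have hm1 : 2 ^ K * (t - r) ≤ 2 ^ K := by
      have h1 : t - r ≤ 1 := by linarith
      nlinarith [pow_pos (show (0:ℝ) < 2 by norm_num) K]
    have hcast : ((2 ^ K - 1 : ℕ) : ℝ) = 2 ^ K - 1 := by
      have : (1:ℕ) ≤ 2 ^ K := Nat.one_le_two_pow
      push_cast [this]
      ring
    have hfle : (⌊2 ^ K * (t - r)⌋₊ : ℝ) ≤ 2 ^ K * (t - r) := Nat.floor_le hm0
    have hflt : 2 ^ K * (t - r) < (⌊2 ^ K * (t - r)⌋₊ : ℝ) + 1 := Nat.lt_floor_add_one _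
    have hjle : ((min ⌊2 ^ K * (t - r)⌋₊ (2 ^ K - 1) : ℕ) : ℝ) ≤ 2 ^ K * (t - r) := by
      rcases min_cases ⌊2 ^ K * (t - r)⌋₊ (2 ^ K - 1) with ⟨heq, _⟩ | ⟨heq, hlt⟩
      · rw [heq]; exact hfle
      · rw [heq, hcast]
        have : ((2 ^ K - 1 : ℕ) : ℝ) ≤ (⌊2 ^ K * (t - r)⌋₊ : ℝ) := by
          exact_mod_cast le_of_lt hlt
        rw [hcast] at this
        linarith
    have hjge : 2 ^ K * (t - r) - 1 ≤ ((min ⌊2 ^ K * (t - r)⌋₊ (2 ^ K - 1) : ℕ) : ℝ) := by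
      rcases min_cases ⌊2 ^ K * (t - r)⌋₊ (2 ^ K - 1) with ⟨heq, _⟩ | ⟨heq, _⟩
      · rw [heq]; linarith
      · rw [heq, hcast]; linarith
    have hpowpos : (0:ℝ) < 2 ^ K := by positivity
    constructor
    · have hgoal : (t - 1 / 2 ^ K) - r ≤ ((min ⌊2 ^ K * (t - r)⌋₊ (2 ^ K - 1) : ℕ) : ℝ) / 2 ^ K := by
        have h' : (2 ^ K * (t - r) - 1) / (2 ^ K : ℝ)
            ≤ ((min ⌊2 ^ K * (t - r)⌋₊ (2 ^ K - 1) : ℕ) : ℝ) / 2 ^ K := by gcongr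
        have heq2 : (2 ^ K * (t - r) - 1) / (2 ^ K : ℝ) = t - r - 1 / 2 ^ K := by
          field_simp
        linarith
      have : u K = r + ((min ⌊2 ^ K * (t - r)⌋₊ (2 ^ K - 1) : ℕ) : ℝ) / 2 ^ K := rfl
      rw [this]
      linarith
    · have hgoal : ((min ⌊2 ^ K * (t - r)⌋₊ (2 ^ K - 1) : ℕ) : ℝ) / 2 ^ K ≤ t - r := by
        have h' : ((min ⌊2 ^ K * (t - r)⌋₊ (2 ^ K - 1) : ℕ) : ℝ) / 2 ^ K
            ≤ (2 ^ K * (t - r)) / (2 ^ K : ℝ) := by gcongr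
        have heq : (2 ^ K * (t - r)) / (2 ^ K : ℝ) = t - r := by field_simp
        linarith
      have : u K = r + ((min ⌊2 ^ K * (t - r)⌋₊ (2 ^ K - 1) : ℕ) : ℝ) / 2 ^ K := rfl
      rw [this]
      linarith
  have hulim : Tendsto u atTop (nhds t) := by
    have hlow : Tendsto (fun K : ℕ => t - 1 / 2 ^ K) atTop (nhds t) := by
      have h1 : Tendsto (fun K : ℕ => (1/2 : ℝ) ^ K) atTop (nhds 0) :=
        tendsto_pow_atTop_nhds_zero_of_lt_one (by norm_num) (by norm_num)
      have h2 := (tendsto_const_nhds (x := t) (f := atTop (α := ℕ))).sub h1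
      simp only [sub_zero] at h2
      refine h2.congr (fun K => ?_)
      rw [div_pow, one_pow]
    exact tendsto_of_tendsto_of_tendsto_of_le_of_le hlow tendsto_const_nhds
      (fun K => (hsqueeze K).1) (fun K => (hsqueeze K).2)
  have hglim : Tendsto (fun K => |g (u K)|) atTop (nhds |g t|) :=
    ((continuous_abs.comp hg).continuousAt.tendsto).comp hulim
  exact le_of_tendsto hglim (Filter.Eventually.of_forall hbound)

private lemma my_drift {Hp a c K : ℝ} (h1 : 1/2 < Hp) (h2 : Hp < 1) (hc : 0 < c) (hK : 0 ≤ K) :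
    Tendsto (fun t : ℝ => a * t + K * (t+1) ^ (Hp + 1/2) + K * (t+1) - c * t ^ (2*Hp))
      atTop atBot := by
  set G : ℝ → ℝ := fun t => a * t ^ (-(2*Hp - 1)) + K * 2 ^ (Hp + 1/2) * t ^ (-(Hp - 1/2))
    + 2 * K * t ^ (-(2*Hp - 1)) - c with hG
  have hGlim : Tendsto G atTop (nhds (a * 0 + K * 2 ^ (Hp + 1/2) * 0 + 2 * K * 0 - c)) := by
    refine Filter.Tendsto.sub_const ?_ c
    refine Filter.Tendsto.add (Filter.Tendsto.add ?_ ?_) ?_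
    · exact (tendsto_rpow_neg_atTop (by linarith)).const_mul a
    · exact (tendsto_rpow_neg_atTop (by linarith)).const_mul _
    · exact (tendsto_rpow_neg_atTop (by linarith)).const_mul _
  have hGlim' : Tendsto G atTop (nhds (-c)) := by
    have : a * 0 + K * 2 ^ (Hp + 1/2) * 0 + 2 * K * 0 - c = -c := by ring
    rwa [this] at hGlim
  have hmul : Tendsto (fun t : ℝ => t ^ (2*Hp) * G t) atTop atBot :=
    Filter.Tendsto.atTop_mul_neg (by linarith) (tendsto_rpow_atTop (by linarith)) hGlim'
  have hg : Tendsto (fun t : ℝ => a * t + K * 2 ^ (Hp + 1/2) * t ^ (Hp + 1/2) + 2 * K * t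
      - c * t ^ (2*Hp)) atTop atBot := by
    refine hmul.congr' ?_
    filter_upwards [eventually_gt_atTop (0:ℝ)] with t ht
    have e1 : t ^ (2*Hp) * t ^ (-(2*Hp - 1)) = t := by
      rw [← Real.rpow_add ht, show 2*Hp + -(2*Hp - 1) = 1 by ring, Real.rpow_one]
    have e2 : t ^ (2*Hp) * t ^ (-(Hp - 1/2)) = t ^ (Hp + 1/2) := by
      rw [← Real.rpow_add ht, show 2*Hp + -(Hp - 1/2) = Hp + 1/2 by ring]
    calc t ^ (2*Hp) * G t
        = a * (t ^ (2*Hp) * t ^ (-(2*Hp - 1)))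
          + K * 2 ^ (Hp + 1/2) * (t ^ (2*Hp) * t ^ (-(Hp - 1/2)))
          + 2 * K * (t ^ (2*Hp) * t ^ (-(2*Hp - 1))) - c * t ^ (2*Hp) := by rw [hG]; ring
      _ = a * t + K * 2 ^ (Hp + 1/2) * t ^ (Hp + 1/2) + 2 * K * t - c * t ^ (2*Hp) := by
          rw [e1, e2]
  refine tendsto_atBot_mono' atTop ?_ hg
  filter_upwards [eventually_ge_atTop (1:ℝ)] with t ht
  have ht0 : (0:ℝ) < t := by linarith
  have hexp : (0:ℝ) ≤ Hp + 1/2 := by linarith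
  have hr1 : (t+1) ^ (Hp + 1/2) ≤ 2 ^ (Hp + 1/2) * t ^ (Hp + 1/2) := by
    rw [← Real.mul_rpow (by norm_num) ht0.le]
    exact Real.rpow_le_rpow (by linarith) (by linarith) hexp
  have hr2 : K * (t+1) ^ (Hp + 1/2) ≤ K * (2 ^ (Hp + 1/2) * t ^ (Hp + 1/2)) :=
    mul_le_mul_of_nonneg_left hr1 hK
  have hr3 : K * (t+1) ≤ 2 * K * t := by nlinarith
  linarith

set_option maxHeartbeats 2000000

/-- For `a > 0`, `b ≠ 0`, `H ∈ (1/2,1)` and a fractional Brownian motion `B` with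
Hurst parameter `H`, the pathwise solution `X t = exp (a t - b² t^(2H)/2 + b B t)`
tends to `0` almost surely as `t → ∞`. -/
theorem geometric_fbm_pathwise_stability
    {Ω : Type*} [MeasurableSpace Ω] (P : Measure Ω) [IsProbabilityMeasure P]
    (H : ℝ) (hH : H ∈ Set.Ioo (1 / 2 : ℝ) 1)
    (a b : ℝ) (ha : 0 < a) (hb : b ≠ 0)
    (B : ℝ → Ω → ℝ)
    (hGauss : ∀ (n : ℕ) (c : Fin n → ℝ) (ts : Fin n → ℝ), (∀ i, 0 ≤ ts i) →
      ∃ v : NNReal,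
        Measure.map (fun ω => ∑ i, c i * B (ts i) ω) P = gaussianReal 0 v)
    (hCenter : ∀ t : ℝ, 0 ≤ t → ∫ ω, B t ω ∂P = 0)
    (hCov : ∀ s t : ℝ, 0 ≤ s → 0 ≤ t →
      ∫ ω, B t ω * B s ω ∂P
        = (1 / 2) * (s ^ (2 * H) + t ^ (2 * H) - |t - s| ^ (2 * H)))
    (hcont : ∀ᵐ ω ∂P, Continuous fun t => B t ω)
    (X : ℝ → Ω → ℝ)
    (hX : ∀ t ω, X t ω
      = Real.exp (a * t - (1 / 2) * b ^ 2 * t ^ (2 * H) + b * B t ω)) :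
    ∀ᵐ ω ∂P, Tendsto (fun t : ℝ => X t ω) atTop (nhds 0) := by
  obtain ⟨hH1, hH2⟩ := hH
  have h2H1 : (1:ℝ) < 2 * H := by linarith
  have h2Hne : (2 * H) ≠ 0 := by linarith
  -- variance of B at a single time
  have hvar : ∀ r : ℝ, 0 ≤ r → ∫ ω, B r ω * B r ω ∂P = r ^ (2 * H) := by
    intro r hr
    rw [hCov r r hr hr, sub_self, abs_zero, Real.zero_rpow h2Hne]
    ring
  -- single-time gaussian law
  have single : ∀ r : ℝ, 0 ≤ r → ∃ v : NNReal, Measure.map (B r) P = gaussianReal 0 v := by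
    intro r hr
    obtain ⟨v, hv⟩ := hGauss 1 ![1] ![r] (by intro i; fin_cases i; simpa using hr)
    refine ⟨v, ?_⟩
    rw [← hv]
    congr 1
    funext ω
    simp [Fin.sum_univ_one]
  have haem : ∀ r : ℝ, 0 ≤ r → AEMeasurable (B r) P := by
    intro r hr
    obtain ⟨v, hv⟩ := single r hr
    exact my_aemeasurable_of_map hv
  have hsqint : ∀ r : ℝ, 0 ≤ r → Integrable (fun ω => (B r ω) ^ 2) P := by
    intro r hr
    obtain ⟨v, hv⟩ := single r hr
    exact (my_moment_via_map hv).1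
  -- increments
  have pair : ∀ q p : ℝ, 0 ≤ q → 0 ≤ p → ∃ v : NNReal,
      Measure.map (fun ω => B p ω - B q ω) P = gaussianReal 0 v
        ∧ (v : ℝ) = |p - q| ^ (2 * H) := by
    intro q p hq hp
    obtain ⟨v, hv⟩ := hGauss 2 ![1, -1] ![p, q] (by
      intro i; fin_cases i <;> simp [hp, hq])
    have hfun : (fun ω => ∑ i : Fin 2, ![(1:ℝ), -1] i * B (![p, q] i) ω)
        = fun ω => B p ω - B q ω := by
      funext ω
      simp [Fin.sum_univ_two]
      ring
    rw [hfun] at hv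
    refine ⟨v, hv, ?_⟩
    have hmom := (my_moment_via_map hv).2
    have hintp := hsqint p hp
    have hintq := hsqint q hq
    have haemp := haem p hp
    have haemq := haem q hq
    have hcross : Integrable (fun ω => B p ω * B q ω) P := by
      have hbint : Integrable (fun ω => (1/2 : ℝ) * ((B p ω) ^ 2 + (B q ω) ^ 2)) P :=
        (hintp.add hintq).const_mul (1/2)
      refine Integrable.mono' hbint (haemp.mul haemq).aestronglyMeasurable ?_
      filter_upwards with ω
      rw [Real.norm_eq_abs, abs_mul]
      nlinarith [sq_nonneg (|B p ω| - |B q ω|), sq_abs (B p ω), sq_abs (B q ω),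
        abs_nonneg (B p ω), abs_nonneg (B q ω)]
    have hexpand : ∫ ω, (B p ω - B q ω) ^ 2 ∂P
        = ∫ ω, (B p ω) ^ 2 ∂P - 2 * ∫ ω, B p ω * B q ω ∂P + ∫ ω, (B q ω) ^ 2 ∂P := by
      have heq : (fun ω => (B p ω - B q ω) ^ 2)
          = fun ω => ((B p ω) ^ 2 - 2 * (B p ω * B q ω)) + (B q ω) ^ 2 := by
        funext ω; ring
      have ic : Integrable (fun ω => (2:ℝ) * (B p ω * B q ω)) P := hcross.const_mul 2
      have ia : Integrable (fun ω => B p ω ^ 2 - 2 * (B p ω * B q ω)) P := hintp.sub ic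
      rw [heq, integral_add ia hintq, integral_sub hintp ic, integral_const_mul]
    have h1 : ∫ ω, (B p ω) ^ 2 ∂P = p ^ (2 * H) := by
      rw [← hvar p hp]
      congr 1; funext ω; ring
    have h2 : ∫ ω, (B q ω) ^ 2 ∂P = q ^ (2 * H) := by
      rw [← hvar q hq]
      congr 1; funext ω; ring
    have h3 := hCov q p hq hp
    rw [← hmom, hexpand, h1, h2, h3]
    ring
  -- events for Borel-Cantelli
  set E1 : ℕ → Set Ω := fun n => {ω | 2 * ((n:ℝ) + 1) ^ (H + 1/2) < |B (n:ℝ) ω|} with hE1def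
  set E2 : ℕ → ℕ → ℕ → Set Ω := fun n k j =>
    {ω | 7 * ((n:ℝ) + 1) * (3/4) ^ (k+1)
      < |B ((n:ℝ) + ((j:ℝ) + 1) / 2 ^ (k+1)) ω - B ((n:ℝ) + (j:ℝ) / 2 ^ (k+1)) ω|} with hE2def
  set s : ℕ → Set Ω := fun n => E1 n ∪ ⋃ (k : ℕ) (j : Fin (2 ^ (k+1))), E2 n k (j : ℕ) with hsdef
  -- probability of E1
  have hPE1 : ∀ n : ℕ, P (E1 n) ≤ ENNReal.ofReal (4 * Real.exp (-((n:ℝ) + 1))) := by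
    intro n
    have hn0 : (0:ℝ) ≤ (n:ℝ) := Nat.cast_nonneg n
    have hn1 : (0:ℝ) < (n:ℝ) + 1 := by linarith
    obtain ⟨v, hmap⟩ := single (n:ℝ) hn0
    have hval : (v : ℝ) = (n:ℝ) ^ (2 * H) := by
      rw [← (my_moment_via_map hmap).2, ← hvar (n:ℝ) hn0]
      congr 1; funext ω; ring
    have hBsq : (((n:ℝ) + 1) ^ H) ^ 2 = ((n:ℝ) + 1) ^ (2 * H) := by
      rw [← Real.rpow_natCast (((n:ℝ) + 1) ^ H) 2, ← Real.rpow_mul hn1.le]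
      norm_num [mul_comm]
    refine my_tail_via_map hmap (σ := ((n:ℝ) + 1) ^ H) ?_ ?_ ?_ ?_
    · positivity
    · rw [hval, hBsq]
      exact Real.rpow_le_rpow hn0 (by linarith) (by linarith)
    · have hle1 : ((n:ℝ) + 1) ^ H ≤ ((n:ℝ) + 1) ^ (H + 1/2) :=
        Real.rpow_le_rpow_of_exponent_le (by linarith) (by linarith)
      have hA : (0:ℝ) ≤ ((n:ℝ) + 1) ^ (H + 1/2) := by positivity
      linarith
    · have hAsq : (((n:ℝ) + 1) ^ (H + 1/2)) ^ 2 = ((n:ℝ) + 1) ^ (2 * H + 1) := by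
        rw [← Real.rpow_natCast (((n:ℝ) + 1) ^ (H + 1/2)) 2, ← Real.rpow_mul hn1.le]
        norm_num
        ring_nf
      refine le_of_eq ?_
      rw [mul_pow, hAsq, hBsq]
      rw [show (2:ℝ) ^ 2 * ((n:ℝ) + 1) ^ (2 * H + 1) / (4 * ((n:ℝ) + 1) ^ (2 * H))
          = ((n:ℝ) + 1) ^ (2 * H + 1) / ((n:ℝ) + 1) ^ (2 * H) by ring]
      rw [← Real.rpow_sub hn1, show (2 * H + 1) - 2 * H = 1 by ring, Real.rpow_one]
  -- probability of E2
  have hPE2 : ∀ n k j : ℕ, j < 2 ^ (k+1) →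
      P (E2 n k j) ≤ ENNReal.ofReal (4 * Real.exp (-(((n:ℝ) + 1) + ((k:ℝ) + 1)))) := by
    intro n k j hj
    have hq0 : (0:ℝ) ≤ (n:ℝ) + (j:ℝ) / 2 ^ (k+1) := by positivity
    have hp0 : (0:ℝ) ≤ (n:ℝ) + ((j:ℝ) + 1) / 2 ^ (k+1) := by positivity
    obtain ⟨v, hmap, hval⟩ := pair _ _ hq0 hp0
    have hdiff : ((n:ℝ) + ((j:ℝ) + 1) / 2 ^ (k+1)) - ((n:ℝ) + (j:ℝ) / 2 ^ (k+1))
        = (1/2 : ℝ) ^ (k+1) := by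
      rw [show ((1:ℝ)/2) ^ (k+1) = 1 / 2 ^ (k+1) by rw [div_pow, one_pow]]
      ring
    rw [hdiff, abs_of_pos (by positivity)] at hval
    have hσsq : Real.sqrt ((1/2 : ℝ) ^ (k+1)) ^ 2 = (1/2 : ℝ) ^ (k+1) :=
      Real.sq_sqrt (by positivity)
    refine my_tail_via_map hmap (σ := Real.sqrt ((1/2 : ℝ) ^ (k+1))) ?_ ?_ ?_ ?_
    · exact Real.sqrt_pos.mpr (by positivity)
    · rw [hval, hσsq]
      calc ((1/2 : ℝ) ^ (k+1)) ^ (2 * H)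
          ≤ ((1/2 : ℝ) ^ (k+1)) ^ (1 : ℝ) :=
            Real.rpow_le_rpow_of_exponent_ge (by positivity)
              (pow_le_one₀ (by norm_num) (by norm_num)) (by linarith)
        _ = (1/2 : ℝ) ^ (k+1) := Real.rpow_one _
    · have h34sq : ((3/4 : ℝ) ^ (k+1)) ^ 2 = (9/16 : ℝ) ^ (k+1) := by
        rw [sq, ← mul_pow]; norm_num
      have h34 : Real.sqrt ((1/2 : ℝ) ^ (k+1)) ≤ (3/4 : ℝ) ^ (k+1) := by
        rw [show (3/4 : ℝ) ^ (k+1) = Real.sqrt (((3/4 : ℝ) ^ (k+1)) ^ 2) from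
          (Real.sqrt_sq (by positivity)).symm]
        refine Real.sqrt_le_sqrt ?_
        rw [h34sq]
        exact pow_le_pow_left₀ (by norm_num) (by norm_num) _
      have hpow : (0:ℝ) ≤ (3/4 : ℝ) ^ (k+1) := by positivity
      have hn1 : (1:ℝ) ≤ (n:ℝ) + 1 := by
        have := Nat.cast_nonneg (α := ℝ) n; linarith
      nlinarith
    · rw [hσsq]
      have h34sq : ((3/4 : ℝ) ^ (k+1)) ^ 2 = (9/16 : ℝ) ^ (k+1) := by
        rw [sq, ← mul_pow]; norm_num
      have hlamsq : (7 * ((n:ℝ) + 1) * (3/4) ^ (k+1)) ^ 2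
          = 49 * ((n:ℝ) + 1) ^ 2 * (9/16 : ℝ) ^ (k+1) := by
        rw [mul_pow, mul_pow, h34sq]
        ring
      have hdiv : (9/16 : ℝ) ^ (k+1) / (1/2 : ℝ) ^ (k+1) = (9/8 : ℝ) ^ (k+1) := by
        rw [← div_pow]; norm_num
      have hhalfpos : (0:ℝ) < (1/2 : ℝ) ^ (k+1) := by positivity
      have hquot : (7 * ((n:ℝ) + 1) * (3/4) ^ (k+1)) ^ 2 / (4 * (1/2 : ℝ) ^ (k+1))
          = 49/4 * ((n:ℝ) + 1) ^ 2 * (9/8 : ℝ) ^ (k+1) := by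
        rw [hlamsq, ← hdiv]
        field_simp
      rw [hquot]
      have hbern : 1 + ((k:ℝ) + 1) * (1/8) ≤ (9/8 : ℝ) ^ (k+1) := by
        have := one_add_mul_le_pow (a := (1/8 : ℝ)) (by norm_num) (k+1)
        rw [show (1 : ℝ) + 1/8 = 9/8 by norm_num] at this
        convert this using 2
        · rfl
        push_cast
        ring
      have hn1 : (1:ℝ) ≤ (n:ℝ) + 1 := by
        have := Nat.cast_nonneg (α := ℝ) n; linarith
      have hk1 : (1:ℝ) ≤ (k:ℝ) + 1 := by
        have := Nat.cast_nonneg (α := ℝ) k; linarith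
      nlinarith [sq_nonneg ((n:ℝ) + 1 - 1), mul_le_mul_of_nonneg_left hbern
        (show (0:ℝ) ≤ 49/4 * ((n:ℝ) + 1) ^ 2 by positivity)]
  -- geometric facts
  have hexpn1 : (0:ℝ) < Real.exp 1 := Real.exp_pos 1
  have hrlt : 2 * Real.exp (-1) ≤ 3/4 := by
    have h1 : (2.7182818283 : ℝ) < Real.exp 1 := Real.exp_one_gt_d9
    rw [Real.exp_neg, mul_comm, inv_mul_le_iff₀ hexpn1]
    nlinarith
  -- union bound
  have hPs : ∀ n : ℕ, P (s n) ≤ ENNReal.ofReal (16 * Real.exp (-((n:ℝ) + 1))) := by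
    intro n
    have hunion : P (⋃ (k : ℕ) (j : Fin (2 ^ (k+1))), E2 n k (j : ℕ))
        ≤ ∑' (k : ℕ), ∑' (j : Fin (2 ^ (k+1))), P (E2 n k (j : ℕ)) :=
      le_trans (measure_iUnion_le _) (ENNReal.tsum_le_tsum fun k => measure_iUnion_le _)
    have hterm : ∀ k : ℕ, ∑' (j : Fin (2 ^ (k+1))), P (E2 n k (j : ℕ))
        ≤ ENNReal.ofReal (4 * Real.exp (-((n:ℝ) + 1)) * (2 * Real.exp (-1)) ^ (k+1)) := by
      intro k
      have hexpk : Real.exp (-((k:ℝ) + 1)) = Real.exp (-1) ^ (k+1) := by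
        rw [← Real.exp_nat_mul]
        congr 1
        push_cast
        ring
      calc ∑' (j : Fin (2 ^ (k+1))), P (E2 n k (j : ℕ))
          ≤ ∑' (_ : Fin (2 ^ (k+1))),
              ENNReal.ofReal (4 * Real.exp (-(((n:ℝ) + 1) + ((k:ℝ) + 1)))) :=
            ENNReal.tsum_le_tsum fun j => hPE2 n k (j : ℕ) j.2
        _ = (2 ^ (k+1) : ℕ) * ENNReal.ofReal (4 * Real.exp (-(((n:ℝ) + 1) + ((k:ℝ) + 1)))) := by
            rw [tsum_fintype]
            simp [Finset.sum_const, Finset.card_univ, nsmul_eq_mul]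
        _ = ENNReal.ofReal ((2 ^ (k+1) : ℝ) * (4 * Real.exp (-(((n:ℝ) + 1) + ((k:ℝ) + 1))))) := by
            rw [← ENNReal.ofReal_natCast (2 ^ (k+1)), ← ENNReal.ofReal_mul (by positivity)]
            congr 1
            push_cast
            ring
        _ = ENNReal.ofReal (4 * Real.exp (-((n:ℝ) + 1)) * (2 * Real.exp (-1)) ^ (k+1)) := by
            congr 1
            rw [show (-(((n:ℝ) + 1) + ((k:ℝ) + 1))) = (-((n:ℝ) + 1)) + (-((k:ℝ) + 1)) by ring,
              Real.exp_add, hexpk, mul_pow]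
            ring
    have hksum : ∑' (k : ℕ),
        ENNReal.ofReal (4 * Real.exp (-((n:ℝ) + 1)) * (2 * Real.exp (-1)) ^ (k+1))
        ≤ ENNReal.ofReal (12 * Real.exp (-((n:ℝ) + 1))) := by
      have hrpos : (0:ℝ) ≤ 2 * Real.exp (-1) := by positivity
      have hsgeo : Summable (fun k : ℕ => (2 * Real.exp (-1)) ^ k) :=
        summable_geometric_of_lt_one hrpos (by linarith)
      have hsummable : Summable
          (fun k : ℕ => 4 * Real.exp (-((n:ℝ) + 1)) * (2 * Real.exp (-1)) ^ (k+1)) := by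
        apply Summable.mul_left
        simp_rw [pow_succ]
        exact hsgeo.mul_right _
      rw [← ENNReal.ofReal_tsum_of_nonneg (fun k => by positivity) hsummable]
      refine ENNReal.ofReal_le_ofReal ?_
      rw [tsum_mul_left]
      have htgeo : ∑' (k : ℕ), (2 * Real.exp (-1)) ^ (k+1) ≤ 3 := by
        have e1 : ∑' (k : ℕ), (2 * Real.exp (-1)) ^ (k+1)
            = (∑' (k : ℕ), (2 * Real.exp (-1)) ^ k) * (2 * Real.exp (-1)) := by
          simp_rw [pow_succ]
          exact tsum_mul_right
        rw [e1, tsum_geometric_of_lt_one hrpos (by linarith)]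
        have hd : (0:ℝ) < 1 - 2 * Real.exp (-1) := by linarith
        have h4 : (1 - 2 * Real.exp (-1))⁻¹ ≤ 4 := by
          rw [← one_div, div_le_iff₀ hd]
          linarith
        calc (1 - 2 * Real.exp (-1))⁻¹ * (2 * Real.exp (-1)) ≤ 4 * (3/4) :=
              mul_le_mul h4 hrlt hrpos (by norm_num)
          _ = 3 := by norm_num
      calc 4 * Real.exp (-((n:ℝ) + 1)) * ∑' (k : ℕ), (2 * Real.exp (-1)) ^ (k+1)
          ≤ 4 * Real.exp (-((n:ℝ) + 1)) * 3 :=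
            mul_le_mul_of_nonneg_left htgeo (by positivity)
        _ = 12 * Real.exp (-((n:ℝ) + 1)) := by ring
    have hsn : s n = E1 n ∪ ⋃ (k : ℕ) (j : Fin (2 ^ (k+1))), E2 n k (j : ℕ) := by
      rw [hsdef]
    rw [hsn]
    calc P (E1 n ∪ ⋃ (k : ℕ) (j : Fin (2 ^ (k+1))), E2 n k (j : ℕ))
        ≤ P (E1 n) + P (⋃ (k : ℕ) (j : Fin (2 ^ (k+1))), E2 n k (j : ℕ)) :=
          measure_union_le _ _
      _ ≤ ENNReal.ofReal (4 * Real.exp (-((n:ℝ) + 1)))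
            + ENNReal.ofReal (12 * Real.exp (-((n:ℝ) + 1))) :=
          add_le_add (hPE1 n)
            (le_trans hunion (le_trans (ENNReal.tsum_le_tsum hterm) hksum))
      _ = ENNReal.ofReal (16 * Real.exp (-((n:ℝ) + 1))) := by
          rw [← ENNReal.ofReal_add (by positivity) (by positivity)]
          congr 1
          ring
  -- Borel-Cantelli
  have htsum : (∑' n : ℕ, P (s n)) ≠ ⊤ := by
    refine ne_top_of_le_ne_top ?_ (ENNReal.tsum_le_tsum hPs)
    have hsummable : Summable (fun n : ℕ => 16 * Real.exp (-((n:ℝ) + 1))) := by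
      apply Summable.mul_left
      have : ∀ n : ℕ, Real.exp (-((n:ℝ) + 1)) = Real.exp (-1) ^ (n+1) := by
        intro n
        rw [← Real.exp_nat_mul]
        congr 1
        push_cast
        ring
      simp_rw [this, pow_succ]
      exact (summable_geometric_of_lt_one (by positivity) (by
        rw [Real.exp_neg]
        rw [inv_lt_one_iff₀]
        right
        linarith [Real.exp_one_gt_d9])).mul_right _
    rw [← ENNReal.ofReal_tsum_of_nonneg (fun n => by positivity) hsummable]
    exact ENNReal.ofReal_ne_top
  have hBC := MeasureTheory.ae_eventually_notMem htsum
  filter_upwards [hcont, hBC] with ω hco hev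
  obtain ⟨N, hN⟩ := Filter.eventually_atTop.mp hev
  -- pathwise bound on each interval [n, n+1]
  have hpath : ∀ n : ℕ, N ≤ n → ∀ t ∈ Set.Icc ((n:ℝ)) ((n:ℝ) + 1),
      |B t ω| ≤ 2 * ((n:ℝ) + 1) ^ (H + 1/2) + 21 * ((n:ℝ) + 1) := by
    intro n hn t ht
    have hns : ω ∉ E1 n ∪ ⋃ (k : ℕ) (j : Fin (2 ^ (k+1))), E2 n k (j : ℕ) := by
      have := hN n hn
      rw [hsdef] at this
      exact this
    have h1 : ω ∉ E1 n := fun h => hns (Set.mem_union_left _ h)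
    have h2 : ∀ k j : ℕ, j < 2 ^ (k+1) → ω ∉ E2 n k j := by
      intro k j hj hmem
      exact hns (Set.mem_union_right _
        (Set.mem_iUnion.mpr ⟨k, Set.mem_iUnion.mpr ⟨⟨j, hj⟩, hmem⟩⟩))
    have h1' : |B ((n:ℝ)) ω| ≤ 2 * ((n:ℝ) + 1) ^ (H + 1/2) := by
      have := h1
      rw [hE1def] at this
      exact not_lt.mp this
    have hchain : |B t ω - B ((n:ℝ)) ω| ≤ 3 * (7 * ((n:ℝ) + 1)) := by
      refine my_chaining (g := fun u => B u ω - B ((n:ℝ)) ω)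
        (hco.sub continuous_const) (by positivity) (sub_self _) ?_ ht
      intro k j hj
      have hne := h2 k j hj
      rw [hE2def] at hne
      have hle : |B ((n:ℝ) + ((j:ℝ) + 1) / 2 ^ (k+1)) ω - B ((n:ℝ) + (j:ℝ) / 2 ^ (k+1)) ω|
          ≤ 7 * ((n:ℝ) + 1) * (3/4) ^ (k+1) := not_lt.mp hne
      calc |(B ((n:ℝ) + ((j:ℝ) + 1) / 2 ^ (k+1)) ω - B ((n:ℝ)) ω)
            - (B ((n:ℝ) + (j:ℝ) / 2 ^ (k+1)) ω - B ((n:ℝ)) ω)|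
          = |B ((n:ℝ) + ((j:ℝ) + 1) / 2 ^ (k+1)) ω - B ((n:ℝ) + (j:ℝ) / 2 ^ (k+1)) ω| := by
            congr 1
            ring
        _ ≤ 7 * ((n:ℝ) + 1) * (3/4) ^ (k+1) := hle
    have habs : |B t ω| ≤ |B ((n:ℝ)) ω| + |B t ω - B ((n:ℝ)) ω| := by
      have := abs_add_le (B ((n:ℝ)) ω) (B t ω - B ((n:ℝ)) ω)
      simpa using this
    linarith
  -- eventual exponent comparison
  have hb2 : (0:ℝ) < b ^ 2 := lt_of_le_of_ne (sq_nonneg b) (Ne.symm (pow_ne_zero 2 hb))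
  have hexpbd : ∀ᶠ t : ℝ in atTop,
      a * t - (1/2) * b ^ 2 * t ^ (2 * H) + b * B t ω
        ≤ a * t + 23 * |b| * (t + 1) ^ (H + 1/2) + 23 * |b| * (t + 1)
          - (1/2 * b ^ 2) * t ^ (2 * H) := by
    filter_upwards [eventually_ge_atTop ((N:ℝ)), eventually_ge_atTop (0:ℝ)] with t htN ht0
    have hnN : N ≤ ⌊t⌋₊ := Nat.le_floor htN
    have hnt : ((⌊t⌋₊:ℕ):ℝ) ≤ t := Nat.floor_le ht0
    have hmem : t ∈ Set.Icc ((⌊t⌋₊:ℕ):ℝ) (((⌊t⌋₊:ℕ):ℝ) + 1) :=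
      ⟨hnt, (Nat.lt_floor_add_one t).le⟩
    have hB := hpath ⌊t⌋₊ hnN t hmem
    have h0b : (0:ℝ) ≤ |b| := abs_nonneg b
    have hfac : (((⌊t⌋₊:ℕ):ℝ) + 1) ^ (H + 1/2) ≤ (t + 1) ^ (H + 1/2) :=
      Real.rpow_le_rpow (by positivity) (by linarith) (by linarith)
    have hfacnn : (0:ℝ) ≤ (((⌊t⌋₊:ℕ):ℝ) + 1) ^ (H + 1/2) := by positivity
    have hbB : b * B t ω ≤ |b| * (2 * (((⌊t⌋₊:ℕ):ℝ) + 1) ^ (H + 1/2)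
        + 21 * (((⌊t⌋₊:ℕ):ℝ) + 1)) := by
      calc b * B t ω ≤ |b * B t ω| := le_abs_self _
        _ = |b| * |B t ω| := abs_mul _ _
        _ ≤ _ := mul_le_mul_of_nonneg_left hB h0b
    have hA1 : |b| * (2 * (((⌊t⌋₊:ℕ):ℝ) + 1) ^ (H + 1/2)) ≤ |b| * (2 * (t + 1) ^ (H + 1/2)) :=
      mul_le_mul_of_nonneg_left (by linarith) h0b
    have hA2 : |b| * (21 * (((⌊t⌋₊:ℕ):ℝ) + 1)) ≤ |b| * (21 * (t + 1)) :=
      mul_le_mul_of_nonneg_left (by linarith) h0b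
    have hA3 : (0:ℝ) ≤ |b| * (t + 1) ^ (H + 1/2) := by positivity
    have hA4 : (0:ℝ) ≤ |b| * (t + 1) := by positivity
    nlinarith [hbB, hA1, hA2, hA3, hA4]
  have hdrift := my_drift (a := a) hH1 hH2 (c := 1/2 * b ^ 2) (K := 23 * |b|)
    (by linarith) (by positivity)
  have hfinal : Tendsto (fun t : ℝ => a * t - (1/2) * b ^ 2 * t ^ (2 * H) + b * B t ω)
      atTop atBot := tendsto_atBot_mono' atTop hexpbd hdrift
  have hXeq : (fun t : ℝ => X t ω)
      = fun t : ℝ => Real.exp (a * t - (1/2) * b ^ 2 * t ^ (2 * H) + b * B t ω) :=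
    funext fun t => hX t ω
  rw [hXeq]
  exact Real.tendsto_exp_atBot.comp hfinal
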